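/- arXiv:1511.01618 — 2 statements merged into one kernel-verified Lean document; each statement's English description precedes it below -/
import Mathlib

section
/- Let W_n be the number of white balls at time n in a large-index urn (model M or model R) with 1/2 < Λ < 1, and let 𝒲_∞ be the almost sure limit of the martingale 𝒲_n := g_n(W_n − E[W_n]). Then 𝒲_∞ is Subgaussian: there exist constants c, C > 0 such that P(|𝒲_∞| ≥ t) ≤ C·e^{−c t²} for all t > 0. -/
open MeasureTheory ProbabilityTheory Filter Set Topology

noncomputable section

/-- Probability of drawing `k` white balls in a sample of size `m` from an urn with
`w` white and `b` black balls, drawing *without* replacement (model M). -/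
def sampleProbM (m k w b : ℕ) : ℝ :=
  (Nat.choose w k * Nat.choose b (m - k) : ℝ) / (Nat.choose (w + b) m : ℝ)

/-- Probability of drawing `k` white balls in a sample of size `m` from an urn with
`w` white and `b` black balls, drawing *with* replacement (model R). -/
def sampleProbR (m k w b : ℕ) : ℝ :=
  (Nat.choose m k : ℝ) * (w : ℝ) ^ k * (b : ℝ) ^ (m - k) / ((w : ℝ) + (b : ℝ)) ^ m

/-- A balanced affine tenable two-color urn scheme with multiple drawings.
`mdlM = true` is model M (sampling without replacement), `mdlM = false` is model R
(sampling with replacement).  `W n`, `B n` are the numbers of white and black balls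
after `n` draws (ℕ-valued, which encodes tenability), `R (n+1)` is the number of white
balls in the `(n+1)`-st sample, and `F` is the filtration generated by the draws. -/
structure UrnScheme {Ω : Type*} [m0 : MeasurableSpace Ω] (μ : Measure Ω)
    (mdlM : Bool) (m : ℕ) (a b : ℕ → ℤ) (σ : ℤ) (W0 B0 : ℕ)
    (W B : ℕ → Ω → ℕ) (R : ℕ → Ω → ℕ) (F : Filtration ℕ m0) : Prop where
  hm : 1 ≤ m
  hσ : 1 ≤ σ
  balanced : ∀ k ≤ m, a k + b k = σ
  affine : ∀ k ≤ m, a k = ((m : ℤ) - (k : ℤ)) * (a (m - 1) - a m) + a m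
  initW : ∀ ω, W 0 ω = W0
  initB : ∀ ω, B 0 ω = B0
  sampleLe : ∀ n ω, R (n + 1) ω ≤ m
  sampleFit : ∀ n ω, (if mdlM then m else 1) ≤ W n ω + B n ω
  dynW : ∀ n ω, (W (n + 1) ω : ℤ) = (W n ω : ℤ) + a (m - R (n + 1) ω)
  dynB : ∀ n ω, (B (n + 1) ω : ℤ) = (B n ω : ℤ) + b (m - R (n + 1) ω)
  measW : ∀ n, Measurable[F n] (W n)
  measB : ∀ n, Measurable[F n] (B n)
  measR : ∀ n, Measurable[F (n + 1)] (R (n + 1))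
  condLaw : ∀ n, ∀ k ≤ m,
      (μ[(({ω | R (n + 1) ω = k}).indicator fun _ => (1 : ℝ)) | F n])
        =ᵐ[μ] fun ω =>
          if mdlM then sampleProbM m k (W n ω) (B n ω)
          else sampleProbR m k (W n ω) (B n ω)

/-- The urn index `Λ = m (a_{m-1} - a_m) / σ`. -/
def urnIndex (m : ℕ) (a : ℕ → ℤ) (σ : ℤ) : ℝ :=
  (m : ℝ) * ((a (m - 1) : ℝ) - (a m : ℝ)) / (σ : ℝ)

/-- `ζ = a_m / (1 - Λ)`. -/
def urnZeta (m : ℕ) (a : ℕ → ℤ) (σ : ℤ) : ℝ :=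
  (a m : ℝ) / (1 - urnIndex m a σ)

/-- `Q = Γ(T₀/σ + Λ) / Γ(T₀/σ)`. -/
def urnQ (T0 : ℕ) (σ : ℤ) (Λ : ℝ) : ℝ :=
  Real.Gamma ((T0 : ℝ) / (σ : ℝ) + Λ) / Real.Gamma ((T0 : ℝ) / (σ : ℝ))

/-- `g_n = Q · Γ(n + T₀/σ) / Γ(n + T₀/σ + Λ)`. -/
def urnG (T0 : ℕ) (σ : ℤ) (Λ : ℝ) (n : ℕ) : ℝ :=
  urnQ T0 σ Λ * Real.Gamma ((n : ℝ) + (T0 : ℝ) / (σ : ℝ)) /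
    Real.Gamma ((n : ℝ) + (T0 : ℝ) / (σ : ℝ) + Λ)

/-- Convergence in distribution of the sequence `X n` (on `(Ω, μ)`) to the law `ν`,
i.e. weak convergence of the image measures. -/
def TendstoInDistribution {Ω : Type*} [MeasurableSpace Ω] (μ : Measure Ω)
    (X : ℕ → Ω → ℝ) (ν : Measure ℝ) : Prop :=
  ∀ f : BoundedContinuousFunction ℝ ℝ,
    Tendsto (fun n => ∫ ω, f (X n ω) ∂μ) atTop (𝓝 (∫ x, f x ∂ν))

/-- The martingale `𝒲_n = g_n (W_n - E[W_n])` for large-index urns. -/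
def calW {Ω : Type*} [MeasurableSpace Ω] (μ : Measure Ω) (σ : ℤ) (Λ : ℝ) (T0 : ℕ)
    (W : ℕ → Ω → ℕ) (n : ℕ) (ω : Ω) : ℝ :=
  urnG T0 σ Λ n * ((W n ω : ℝ) - ∫ ω', (W n ω' : ℝ) ∂μ)

/-- The scaling constant `α = ((1-Λ)/(QΛ)) √(m(2Λ-1)/(a_m b_0))`. -/
def alphaConst (m : ℕ) (a b : ℕ → ℤ) (σ : ℤ) (T0 : ℕ) : ℝ :=
  (1 - urnIndex m a σ) / (urnQ T0 σ (urnIndex m a σ) * urnIndex m a σ) *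
    Real.sqrt ((m : ℝ) * (2 * urnIndex m a σ - 1) / ((a m : ℝ) * (b 0 : ℝ)))


section Helpers

open Finset

lemma vander_range (w b M : ℕ) :
    ∑ k ∈ Finset.range (M+1), w.choose k * b.choose (M-k) = (w+b).choose M := by
  rw [Nat.add_choose_eq, Finset.Nat.sum_antidiagonal_eq_sum_range_succ_mk]

lemma mul_choose_aux (w j : ℕ) : (j+1) * w.choose (j+1) = w * (w-1).choose j := by
  cases w with
  | zero => simp
  | succ v => rw [mul_comm, ← Nat.add_one_mul_choose_eq]; simp [Nat.succ_sub_one]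

lemma vander_weighted (w b M : ℕ) (hM : 1 ≤ M) :
    ∑ k ∈ Finset.range (M+1), k * (w.choose k * b.choose (M-k))
      = w * ((w-1+b).choose (M-1)) := by
  rw [Finset.sum_range_succ']
  simp only [Nat.zero_eq, zero_mul, add_zero]
  have : ∀ j, (j+1) * (w.choose (j+1) * b.choose (M-(j+1)))
      = w * ((w-1).choose j * b.choose ((M-1)-j)) := by
    intro j
    have h1 : M - (j+1) = (M-1) - j := by omega
    rw [h1, ← mul_assoc, mul_choose_aux, mul_assoc]
  simp only [this]
  rw [← Finset.mul_sum]
  obtain ⟨M', rfl⟩ : ∃ M', M = M' + 1 := ⟨M - 1, by omega⟩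
  simp only [Nat.add_sub_cancel]
  rw [vander_range]

lemma sampleProbM_sum (m w b : ℕ) (h : m ≤ w + b) :
    ∑ k ∈ Finset.range (m+1), sampleProbM m k w b = 1 := by
  have hpos : (0:ℝ) < ((w+b).choose m : ℝ) := by
    exact_mod_cast Nat.choose_pos h
  unfold sampleProbM
  rw [← Finset.sum_div, div_eq_one_iff_eq (ne_of_gt hpos)]
  exact_mod_cast vander_range w b m

lemma sampleProbM_mean (m w b : ℕ) (hm : 1 ≤ m) (h : m ≤ w + b) :
    ∑ k ∈ Finset.range (m+1), (k:ℝ) * sampleProbM m k w b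
      = m * w / (w + b) := by
  have hpos : (0:ℝ) < ((w+b).choose m : ℝ) := by exact_mod_cast Nat.choose_pos h
  have hT : (0:ℝ) < ((w:ℝ) + b) := by
    have : 1 ≤ w + b := le_trans hm h
    exact_mod_cast Nat.lt_of_lt_of_le Nat.zero_lt_one this
  unfold sampleProbM
  simp only [← mul_div_assoc]
  rw [← Finset.sum_div]
  have hnum : ∑ x ∈ Finset.range (m+1), (x:ℝ) * ((w.choose x : ℝ) * (b.choose (m-x) : ℝ))
      = (w:ℝ) * ((w-1+b).choose (m-1) : ℝ) := by
    have h' : ((∑ k ∈ Finset.range (m+1), k * (w.choose k * b.choose (m-k)) : ℕ) : ℝ)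
        = ((w * ((w-1+b).choose (m-1)) : ℕ) : ℝ) := by exact_mod_cast vander_weighted w b m hm
    push_cast at h'
    rw [← h']
  rw [hnum]
  rcases Nat.eq_zero_or_pos w with hw | hw
  · subst hw; simp
  · have hw1 : w - 1 + b = w + b - 1 := by omega
    have hkey : (w + b) * ((w+b-1).choose (m-1)) = ((w+b).choose m) * m := by
      have := Nat.add_one_mul_choose_eq (w+b-1) (m-1)
      have h1 : (w+b-1) + 1 = w + b := by omega
      have h2 : (m-1) + 1 = m := by omega
      rwa [h1, h2] at this
    rw [hw1, div_eq_div_iff (ne_of_gt hpos) (ne_of_gt hT)]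
    have hkey' : ((w+b:ℕ):ℝ) * (((w+b-1).choose (m-1) : ℕ) : ℝ)
        = (((w+b).choose m : ℕ) : ℝ) * ((m:ℕ):ℝ) := by exact_mod_cast hkey
    push_cast at hkey'
    nlinarith [hkey']

lemma binom_sum (m w b : ℕ) :
    ∑ k ∈ Finset.range (m+1), (m.choose k : ℝ) * (w:ℝ)^k * (b:ℝ)^(m-k) = ((w:ℝ)+b)^m := by
  rw [add_pow]
  apply Finset.sum_congr rfl; intro k _; ring

lemma binom_weighted (m w b : ℕ) (hm : 1 ≤ m) :
    ∑ k ∈ Finset.range (m+1), (k:ℝ) * ((m.choose k : ℝ) * (w:ℝ)^k * (b:ℝ)^(m-k))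
      = m * w * ((w:ℝ)+b)^(m-1) := by
  rw [Finset.sum_range_succ']
  simp only [Nat.cast_zero, zero_mul, add_zero]
  have key : ∀ j : ℕ, ((j+1:ℕ):ℝ) * ((m.choose (j+1) : ℝ) * (w:ℝ)^(j+1) * (b:ℝ)^(m-(j+1)))
      = (m:ℝ) * (w:ℝ) * (((m-1).choose j : ℝ) * (w:ℝ)^j * (b:ℝ)^((m-1)-j)) := by
    intro j
    have h1 : m - (j+1) = (m-1) - j := by omega
    have h2' : ((j+1:ℕ):ℝ) * ((m.choose (j+1) : ℕ) : ℝ) = ((m:ℕ):ℝ) * (((m-1).choose j : ℕ) : ℝ) := by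
      exact_mod_cast mul_choose_aux m j
    rw [h1, pow_succ]
    push_cast at h2' ⊢
    linear_combination ((w:ℝ)^j * (w:ℝ) * (b:ℝ)^((m-1)-j)) * h2'
  calc ∑ j ∈ Finset.range m, ((j+1:ℕ):ℝ) * ((m.choose (j+1) : ℝ) * (w:ℝ)^(j+1) * (b:ℝ)^(m-(j+1)))
      = ∑ j ∈ Finset.range m, (m:ℝ) * (w:ℝ) * (((m-1).choose j : ℝ) * (w:ℝ)^j * (b:ℝ)^((m-1)-j)) := by
        apply Finset.sum_congr rfl; intro j _; exact key j
    _ = (m:ℝ) * (w:ℝ) * ∑ j ∈ Finset.range m, (((m-1).choose j : ℝ) * (w:ℝ)^j * (b:ℝ)^((m-1)-j)) := by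
        rw [Finset.mul_sum]
    _ = m * w * ((w:ℝ)+b)^(m-1) := by
        obtain ⟨M', rfl⟩ : ∃ M', m = M' + 1 := ⟨m - 1, by omega⟩
        simp only [Nat.add_sub_cancel]
        rw [binom_sum]

lemma sampleProbR_sum (m w b : ℕ) (h : 1 ≤ w + b) :
    ∑ k ∈ Finset.range (m+1), sampleProbR m k w b = 1 := by
  have hT : (0:ℝ) < ((w:ℝ) + b) := by exact_mod_cast h
  unfold sampleProbR
  rw [← Finset.sum_div, binom_sum, div_self (by positivity)]

lemma sampleProbR_mean (m w b : ℕ) (hm : 1 ≤ m) (h : 1 ≤ w + b) :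
    ∑ k ∈ Finset.range (m+1), (k:ℝ) * sampleProbR m k w b = m * w / (w + b) := by
  have hT : (0:ℝ) < ((w:ℝ) + b) := by exact_mod_cast h
  unfold sampleProbR
  simp only [← mul_div_assoc]
  rw [← Finset.sum_div]
  rw [binom_weighted m w b hm]
  obtain ⟨M', rfl⟩ : ∃ M', m = M' + 1 := ⟨m - 1, by omega⟩
  simp only [Nat.add_sub_cancel]
  rw [pow_succ]
  field_simp

section G
variable {T0 : ℕ} {σ : ℤ} {Λ : ℝ}

lemma urnG_pos (hρ : 0 < (T0:ℝ)/(σ:ℝ)) (hΛ : 0 < Λ) (n : ℕ) : 0 < urnG T0 σ Λ n := by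
  have h1 : 0 < Real.Gamma ((T0:ℝ)/(σ:ℝ)) := Real.Gamma_pos_of_pos hρ
  have h2 : 0 < Real.Gamma ((T0:ℝ)/(σ:ℝ) + Λ) := Real.Gamma_pos_of_pos (by linarith)
  have h3 : 0 < Real.Gamma ((n:ℝ) + (T0:ℝ)/(σ:ℝ)) :=
    Real.Gamma_pos_of_pos (by positivity)
  have h4 : 0 < Real.Gamma ((n:ℝ) + (T0:ℝ)/(σ:ℝ) + Λ) :=
    Real.Gamma_pos_of_pos (by positivity)
  unfold urnG urnQ
  positivity

lemma urnG_zero (hρ : 0 < (T0:ℝ)/(σ:ℝ)) (hΛ : 0 < Λ) : urnG T0 σ Λ 0 = 1 := by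
  have h1 : Real.Gamma ((T0:ℝ)/(σ:ℝ)) ≠ 0 := ne_of_gt (Real.Gamma_pos_of_pos hρ)
  have h2 : Real.Gamma ((T0:ℝ)/(σ:ℝ) + Λ) ≠ 0 := ne_of_gt (Real.Gamma_pos_of_pos (by linarith))
  unfold urnG urnQ
  push_cast
  rw [zero_add]
  field_simp

lemma urnG_succ (hρ : 0 < (T0:ℝ)/(σ:ℝ)) (hΛ : 0 < Λ) (n : ℕ) :
    urnG T0 σ Λ (n+1) = urnG T0 σ Λ n *
      (((n:ℝ) + (T0:ℝ)/(σ:ℝ)) / ((n:ℝ) + (T0:ℝ)/(σ:ℝ) + Λ)) := by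
  set ρ := (T0:ℝ)/(σ:ℝ) with hρdef
  have hx : (0:ℝ) < (n:ℝ) + ρ := by positivity
  have hy : (0:ℝ) < (n:ℝ) + ρ + Λ := by positivity
  have e1 : ((n+1:ℕ):ℝ) + ρ = ((n:ℝ) + ρ) + 1 := by push_cast; ring
  unfold urnG
  rw [← hρdef]
  rw [e1, show ((n:ℝ) + ρ + 1 + Λ) = ((n:ℝ) + ρ + Λ) + 1 from by ring,
    Real.Gamma_add_one (ne_of_gt hx), Real.Gamma_add_one (ne_of_gt hy)]
  have h3 : Real.Gamma ((n:ℝ) + ρ) ≠ 0 := ne_of_gt (Real.Gamma_pos_of_pos hx)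
  have h4 : Real.Gamma ((n:ℝ) + ρ + Λ) ≠ 0 := ne_of_gt (Real.Gamma_pos_of_pos hy)
  field_simp

lemma urnG_antitone (hρ : 0 < (T0:ℝ)/(σ:ℝ)) (hΛ : 0 < Λ) (n : ℕ) :
    urnG T0 σ Λ (n+1) ≤ urnG T0 σ Λ n := by
  rw [urnG_succ hρ hΛ n]
  have hg := urnG_pos hρ hΛ n
  have hx : (0:ℝ) < (n:ℝ) + (T0:ℝ)/(σ:ℝ) := by positivity
  nlinarith [div_le_one_of_le₀ (by linarith : (n:ℝ) + (T0:ℝ)/(σ:ℝ) ≤ (n:ℝ) + (T0:ℝ)/(σ:ℝ) + Λ)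
    (by linarith : (0:ℝ) ≤ (n:ℝ) + (T0:ℝ)/(σ:ℝ) + Λ)]

lemma urnG_le (hρ : 0 < (T0:ℝ)/(σ:ℝ)) (hΛ0 : 0 < Λ) (hΛ1 : Λ ≤ 1) (n : ℕ) :
    urnG T0 σ Λ n * ((n:ℝ) + (T0:ℝ)/(σ:ℝ)) ^ Λ ≤ ((T0:ℝ)/(σ:ℝ)) ^ Λ := by
  set ρ := (T0:ℝ)/(σ:ℝ) with hρdef
  induction n with
  | zero => rw [urnG_zero hρ hΛ0]; push_cast; rw [zero_add, one_mul]
  | succ n ih =>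
    have hx : (0:ℝ) < (n:ℝ) + ρ := by positivity
    have hy : (0:ℝ) < (n:ℝ) + ρ + Λ := by positivity
    have hg := urnG_pos hρ hΛ0 n
    rw [urnG_succ hρ hΛ0 n]
    have e1 : ((n+1:ℕ):ℝ) + ρ = ((n:ℝ) + ρ) + 1 := by push_cast; ring
    rw [e1]
    have hkey : (((n:ℝ)+ρ)+1) ^ Λ * ((n:ℝ)+ρ) ^ (1-Λ) ≤ (n:ℝ) + ρ + Λ := by
      have h := Real.geom_mean_le_arith_mean2_weighted (w₁ := Λ) (w₂ := 1-Λ)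
        (p₁ := ((n:ℝ)+ρ)+1) (p₂ := (n:ℝ)+ρ) (le_of_lt hΛ0) (by linarith)
        (by linarith) (le_of_lt hx) (by ring)
      calc (((n:ℝ)+ρ)+1) ^ Λ * ((n:ℝ)+ρ) ^ (1-Λ) ≤ Λ * (((n:ℝ)+ρ)+1) + (1-Λ) * ((n:ℝ)+ρ) := h
        _ = (n:ℝ) + ρ + Λ := by ring
    have hcollapse : ((n:ℝ)+ρ)^(1-Λ) * ((n:ℝ)+ρ)^Λ = (n:ℝ)+ρ := by
      rw [← Real.rpow_add hx, show (1-Λ)+Λ = 1 from by ring, Real.rpow_one]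
    have hstep : ((n:ℝ)+ρ) / ((n:ℝ)+ρ+Λ) * (((n:ℝ)+ρ)+1) ^ Λ ≤ ((n:ℝ)+ρ) ^ Λ := by
      rw [div_mul_eq_mul_div, div_le_iff₀ hy]
      have hmul := mul_le_mul_of_nonneg_right hkey (Real.rpow_nonneg (le_of_lt hx) Λ)
      calc ((n:ℝ)+ρ) * (((n:ℝ)+ρ)+1) ^ Λ
          = (((n:ℝ)+ρ)+1) ^ Λ * ((n:ℝ)+ρ) ^ (1-Λ) * ((n:ℝ)+ρ) ^ Λ := by
            rw [mul_assoc, hcollapse]; ring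
        _ ≤ ((n:ℝ) + ρ + Λ) * ((n:ℝ)+ρ) ^ Λ := hmul
        _ = ((n:ℝ)+ρ) ^ Λ * ((n:ℝ)+ρ+Λ) := by ring
    calc urnG T0 σ Λ n * (((n:ℝ)+ρ)/((n:ℝ)+ρ+Λ)) * (((n:ℝ)+ρ)+1) ^ Λ
        = urnG T0 σ Λ n * (((n:ℝ)+ρ)/((n:ℝ)+ρ+Λ) * (((n:ℝ)+ρ)+1) ^ Λ) := by ring
      _ ≤ urnG T0 σ Λ n * ((n:ℝ)+ρ) ^ Λ := mul_le_mul_of_nonneg_left hstep (le_of_lt hg)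
      _ ≤ ρ ^ Λ := ih

end G

lemma integrable_bdd {Ω : Type*} [MeasurableSpace Ω] {μ : Measure Ω} [IsFiniteMeasure μ]
    {f : Ω → ℝ} (hf : AEStronglyMeasurable f μ) {C : ℝ} (h : ∀ ω, |f ω| ≤ C) :
    Integrable f μ :=
  Integrable.mono' (integrable_const C) hf
    (Filter.Eventually.of_forall (by simpa [Real.norm_eq_abs] using h))

lemma exp_le_cosh_add (s c x : ℝ) (hc : 0 < c) (hx : |x| ≤ c) :
    Real.exp (s * x) ≤ Real.cosh (s * c) + Real.sinh (s * c) / c * x := by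
  have hxc := abs_le.1 hx
  have h2c : (0:ℝ) < 2*c := by linarith
  have hl0 : 0 ≤ (c + x) / (2*c) := div_nonneg (by linarith) (by linarith)
  have hr0 : 0 ≤ (c - x) / (2*c) := div_nonneg (by linarith) (by linarith)
  have hsum : (c + x)/(2*c) + (c - x)/(2*c) = 1 := by field_simp; ring
  have hcvx := convexOn_exp.2 (Set.mem_univ (s*c)) (Set.mem_univ (-(s*c))) hl0 hr0 hsum
  simp only [smul_eq_mul] at hcvx
  have harg : ((c + x) / (2*c)) * (s*c) + ((c - x) / (2*c)) * (-(s*c)) = s * x := by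
    rw [div_mul_eq_mul_div, div_mul_eq_mul_div, ← add_div,
      div_eq_iff (ne_of_gt h2c)]
    ring
  rw [harg] at hcvx
  rw [Real.cosh_eq, Real.sinh_eq]
  refine le_trans hcvx (le_of_eq ?_)
  have hcne : c ≠ 0 := ne_of_gt hc
  field_simp
  ring

lemma summable_rpow_shift (ρ p : ℝ) (hρ : 0 < ρ) (hp : 1 < p) :
    Summable (fun n : ℕ => (((n:ℝ) + ρ) ^ p)⁻¹) := by
  rw [← summable_nat_add_iff 1]
  have hs : Summable (fun n : ℕ => (((n+1:ℕ):ℝ) ^ p)⁻¹) :=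
    (summable_nat_add_iff 1).2 (Real.summable_nat_rpow_inv.mpr hp)
  apply Summable.of_nonneg_of_le (fun n => by positivity) (fun n => ?_) hs
  have hb : (0:ℝ) < ((n+1:ℕ):ℝ) := by positivity
  have h1 : ((n+1:ℕ):ℝ) ^ p ≤ (((n+1:ℕ):ℝ) + ρ) ^ p :=
    Real.rpow_le_rpow (le_of_lt hb) (by linarith) (by linarith)
  exact inv_anti₀ (Real.rpow_pos_of_pos hb p) h1

end Helpers

set_option maxHeartbeats 2000000 in
/-- The limit `𝒲_∞` of the martingale `𝒲_n = g_n (W_n - E[W_n])` in a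
large-index urn is Subgaussian. -/
theorem largeIndex_subgaussian {Ω : Type*} [m0 : MeasurableSpace Ω] (μ : Measure Ω)
    [IsProbabilityMeasure μ] (mdlM : Bool) (m : ℕ) (a b : ℕ → ℤ) (σ : ℤ) (W0 B0 : ℕ)
    (W B : ℕ → Ω → ℕ) (R : ℕ → Ω → ℕ) (F : Filtration ℕ m0)
    (hurn : UrnScheme μ mdlM m a b σ W0 B0 W B R F)
    (ham : 1 ≤ a m) (hb0 : 1 ≤ b 0)
    (hΛlo : 1 / 2 < urnIndex m a σ) (hΛhi : urnIndex m a σ < 1)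
    (Winf : Ω → ℝ)
    (hWinf : ∀ᵐ ω ∂μ, Tendsto (fun n : ℕ => calW μ σ (urnIndex m a σ) (W0 + B0) W n ω)
      atTop (𝓝 (Winf ω))) :
    ∃ c C : ℝ, 0 < c ∧ 0 < C ∧ ∀ t : ℝ, 0 < t →
      (μ {ω | t ≤ |Winf ω|}).toReal ≤ C * Real.exp (-c * t ^ 2) := by
  classical
  obtain ⟨hm1, hσ1, hbal, haff, hinitW, hinitB, hRle, hfit, hdynW, hdynB, hmeasW, hmeasB,
    hmeasR, hclaw⟩ := hurn
  set T0 : ℕ := W0 + B0 with hT0def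
  set Λ : ℝ := urnIndex m a σ with hΛdef
  set g : ℕ → ℝ := urnG T0 σ Λ with hgdef
  have hσR : (0:ℝ) < (σ:ℝ) := by exact_mod_cast lt_of_lt_of_le zero_lt_one hσ1
  have hΩ : Nonempty Ω := by
    rcases isEmpty_or_nonempty Ω with hE | hN
    · have h1 := measure_univ (μ := μ)
      rw [Set.univ_eq_empty_iff.2 hE, measure_empty] at h1
      exact absurd h1 zero_ne_one
    · exact hN
  have hT0pos : 1 ≤ T0 := by
    obtain ⟨ω0⟩ := hΩ
    have h := hfit 0 ω0
    rw [hinitW ω0, hinitB ω0] at h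
    calc 1 ≤ (if mdlM then m else 1) := by cases mdlM <;> simpa using hm1
      _ ≤ W0 + B0 := h
  set ρ : ℝ := (T0:ℝ)/(σ:ℝ) with hρdef
  have hρpos : 0 < ρ := by
    apply div_pos _ hσR
    exact_mod_cast lt_of_lt_of_le zero_lt_one hT0pos
  have hΛpos : 0 < Λ := lt_trans (by norm_num) hΛlo
  have hΛle1 : Λ ≤ 1 := le_of_lt hΛhi
  set d : ℤ := a (m-1) - a m with hddef
  have hΛ_eq : Λ = (m:ℝ) * (d:ℝ) / (σ:ℝ) := by
    rw [hΛdef]; unfold urnIndex; rw [hddef]; push_cast; ring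
  have hdpos : 0 < (d:ℝ) := by
    by_contra hcon
    push_neg at hcon
    have hmd : (m:ℝ) * (d:ℝ) ≤ 0 :=
      mul_nonpos_iff.2 (Or.inl ⟨by positivity, hcon⟩)
    have : Λ ≤ 0 := by rw [hΛ_eq]; exact div_nonpos_of_nonpos_of_nonneg hmd (le_of_lt hσR)
    linarith
  have hd1 : (1:ℤ) ≤ d := by
    have : (0:ℤ) < d := by exact_mod_cast hdpos
    omega
  -- affine values
  have haval : ∀ k, k ≤ m → a (m - k) = (k:ℤ) * d + a m := by
    intro k hk
    have h := haff (m - k) (Nat.sub_le m k)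
    have hc : ((m:ℤ) - ((m - k : ℕ):ℤ)) = (k:ℤ) := by omega
    rw [h, hc]
  have hav_lb : ∀ k, k ≤ m → (1:ℤ) ≤ a (m - k) := by
    intro k hk
    rw [haval k hk]
    have : (0:ℤ) ≤ (k:ℤ) * d := mul_nonneg (by positivity) (by omega)
    omega
  have hav_ub : ∀ k, k ≤ m → a (m - k) ≤ a 0 := by
    intro k hk
    have h0 : a 0 = (m:ℤ) * d + a m := by
      have := haval m (le_refl m)
      simpa using this
    rw [haval k hk, h0]
    have : (k:ℤ) * d ≤ (m:ℤ) * d := by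
      apply mul_le_mul_of_nonneg_right _ (by omega : (0:ℤ) ≤ d)
      exact_mod_cast hk
    omega
  set A : ℝ := (a 0 : ℝ) with hAdef
  have hA1 : (1:ℝ) ≤ A := by
    have := hav_lb 0 (Nat.zero_le m)
    simp only [Nat.sub_zero] at this
    have h0 : (1:ℤ) ≤ a 0 := le_trans this (hav_ub 0 (Nat.zero_le m))
    rw [hAdef]
    exact_mod_cast h0
  have habs : ∀ n ω, |(a (m - R (n+1) ω) : ℝ)| ≤ A := by
    intro n ω
    have hk := hRle n ω
    have h1 : (1:ℤ) ≤ a (m - R (n+1) ω) := hav_lb _ hk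
    have h2 : a (m - R (n+1) ω) ≤ a 0 := hav_ub _ hk
    rw [abs_of_nonneg (by exact_mod_cast le_trans zero_le_one h1), hAdef]
    exact_mod_cast h2
  -- total number of balls
  have hT : ∀ n ω, (W n ω : ℤ) + (B n ω : ℤ) = (T0:ℤ) + σ * n := by
    intro n
    induction n with
    | zero => intro ω; rw [hinitW ω, hinitB ω]; push_cast [hT0def]; ring
    | succ n ih =>
      intro ω
      have hj : m - R (n+1) ω ≤ m := Nat.sub_le _ _
      have hb := hbal _ hj
      have := hdynW n ω
      have h2 := hdynB n ω
      push_cast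
      push_cast at ih
      rw [this, h2]
      have := ih ω
      linarith [hb]
  have hTR : ∀ n ω, (W n ω : ℝ) + (B n ω : ℝ) = (σ:ℝ) * ((n:ℝ) + ρ) := by
    intro n ω
    have h := hT n ω
    have h' : ((W n ω : ℤ) : ℝ) + ((B n ω : ℤ) : ℝ) = ((T0:ℤ):ℝ) + (σ:ℝ) * (n:ℝ) := by
      exact_mod_cast h
    push_cast at h'
    rw [hρdef]
    field_simp
    linarith
  have hWleR : ∀ n ω, (W n ω : ℝ) ≤ (σ:ℝ) * ((n:ℝ) + ρ) := by
    intro n ω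
    have := hTR n ω
    have hB : (0:ℝ) ≤ (B n ω : ℝ) := by positivity
    linarith
  -- measurability and integrability
  have hWm : ∀ n, Measurable (fun ω => (W n ω : ℝ)) := fun n =>
    measurable_from_top.comp ((hmeasW n).mono (F.le n) le_rfl)
  have hWmF : ∀ n, Measurable[F n] (fun ω => (W n ω : ℝ)) := fun n =>
    measurable_from_top.comp (hmeasW n)
  have hWint : ∀ n, Integrable (fun ω => (W n ω : ℝ)) μ := by
    intro n
    apply integrable_bdd (hWm n).aestronglyMeasurable (C := (σ:ℝ) * ((n:ℝ) + ρ))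
    intro ω
    rw [abs_of_nonneg (by positivity)]
    exact hWleR n ω
  set e : ℕ → ℝ := fun n => ∫ ω, (W n ω : ℝ) ∂μ with hedef
  have he_nonneg : ∀ n, 0 ≤ e n := fun n => integral_nonneg (fun ω => by positivity)
  have he_le : ∀ n, e n ≤ (σ:ℝ) * ((n:ℝ) + ρ) := by
    intro n
    rw [hedef]
    calc ∫ ω, (W n ω : ℝ) ∂μ ≤ ∫ _, (σ:ℝ) * ((n:ℝ) + ρ) ∂μ :=
        integral_mono (hWint n) (integrable_const _) (hWleR n)
      _ = (σ:ℝ) * ((n:ℝ) + ρ) := by simp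
  have hdev : ∀ n ω, |(W n ω : ℝ) - e n| ≤ (σ:ℝ) * ((n:ℝ) + ρ) := by
    intro n ω
    rw [abs_le]
    constructor
    · have := he_le n; have : (0:ℝ) ≤ (W n ω : ℝ) := by positivity
      linarith [he_le n]
    · linarith [hWleR n ω, he_nonneg n]
  -- measurability of increments and indicators
  have hIncm : ∀ n, Measurable (fun ω => (a (m - R (n+1) ω) : ℝ)) := fun n =>
    (measurable_from_top (f := fun k : ℕ => ((a (m - k) : ℤ) : ℝ))).comp
      ((hmeasR n).mono (F.le (n+1)) le_rfl)
  have hIncInt : ∀ n, Integrable (fun ω => (a (m - R (n+1) ω) : ℝ)) μ := fun n =>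
    integrable_bdd (hIncm n).aestronglyMeasurable (habs n)
  have hsetm : ∀ n k, MeasurableSet {ω | R (n+1) ω = k} := fun n k =>
    ((hmeasR n).mono (F.le (n+1)) le_rfl) (measurableSet_singleton k)
  have hindInt : ∀ n k, Integrable
      (fun ω => ({ω' | R (n+1) ω' = k}).indicator (fun _ => (1:ℝ)) ω) μ := by
    intro n k
    apply integrable_bdd (C := 1)
    · exact (measurable_const.indicator (hsetm n k)).aestronglyMeasurable
    · intro ω
      rw [Set.indicator_apply]
      split <;> norm_num
  have htermInt : ∀ n k, Integrable
      (fun ω => (a (m-k) : ℝ) * ({ω' | R (n+1) ω' = k}).indicator (fun _ => (1:ℝ)) ω) μ :=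
    fun n k => (hindInt n k).const_mul _
  have hdecomp : ∀ n, (fun ω => (a (m - R (n+1) ω) : ℝ))
      = ∑ k ∈ Finset.range (m+1),
          fun ω => (a (m-k) : ℝ) * ({ω' | R (n+1) ω' = k}).indicator (fun _ => (1:ℝ)) ω := by
    intro n
    funext ω
    rw [Finset.sum_apply]
    rw [Finset.sum_eq_single (R (n+1) ω)]
    · rw [Set.indicator_of_mem (show ω ∈ {ω' | R (n+1) ω' = R (n+1) ω} from rfl), mul_one]
    · intro k _ hne
      rw [Set.indicator_of_notMem (fun hmem => hne (Set.mem_setOf.mp hmem).symm), mul_zero]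
    · intro hnot
      exact absurd (Finset.mem_range.2 (Nat.lt_succ_of_le (hRle n ω))) hnot
  -- conditional expectation of the increment
  have hcond : ∀ n, μ[(fun ω => (a (m - R (n+1) ω) : ℝ)) | F n]
      =ᵐ[μ] fun ω => (m:ℝ) * (d:ℝ) * (W n ω : ℝ) / ((σ:ℝ) * ((n:ℝ)+ρ)) + (a m : ℝ) := by
    intro n
    have hterm : ∀ k ∈ Finset.range (m+1),
        μ[(fun ω => (a (m-k) : ℝ) * ({ω' | R (n+1) ω' = k}).indicator (fun _ => (1:ℝ)) ω) | F n]
          =ᵐ[μ] fun ω => (a (m-k) : ℝ) *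
            (if mdlM then sampleProbM m k (W n ω) (B n ω)
             else sampleProbR m k (W n ω) (B n ω)) := by
      intro k hk
      have hk' : k ≤ m := Nat.lt_succ_iff.mp (Finset.mem_range.mp hk)
      have hsmul : (fun ω => (a (m-k) : ℝ) * ({ω' | R (n+1) ω' = k}).indicator (fun _ => (1:ℝ)) ω)
          = ((a (m-k) : ℝ)) • (({ω' | R (n+1) ω' = k}).indicator (fun _ => (1:ℝ))) := by
        funext ω; simp [smul_eq_mul]
      rw [hsmul]
      refine (condExp_smul _ _ _).trans ?_
      filter_upwards [hclaw n k hk'] with ω hω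
      simp only [Pi.smul_apply, smul_eq_mul, hω]
    calc μ[(fun ω => (a (m - R (n+1) ω) : ℝ)) | F n]
        = μ[∑ k ∈ Finset.range (m+1),
            fun ω => (a (m-k) : ℝ) * ({ω' | R (n+1) ω' = k}).indicator (fun _ => (1:ℝ)) ω | F n] := by
          rw [hdecomp n]
      _ =ᵐ[μ] ∑ k ∈ Finset.range (m+1),
            μ[fun ω => (a (m-k) : ℝ) * ({ω' | R (n+1) ω' = k}).indicator (fun _ => (1:ℝ)) ω | F n] :=
          condExp_finsetSum (fun k _ => htermInt n k) _
      _ =ᵐ[μ] ∑ k ∈ Finset.range (m+1), fun ω => (a (m-k) : ℝ) *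
            (if mdlM then sampleProbM m k (W n ω) (B n ω)
             else sampleProbR m k (W n ω) (B n ω)) := eventuallyEq_sum hterm
      _ = fun ω => (m:ℝ) * (d:ℝ) * (W n ω : ℝ) / ((σ:ℝ) * ((n:ℝ)+ρ)) + (a m : ℝ) := by
          funext ω
          rw [Finset.sum_apply]
          have hwb : (W n ω : ℝ) + (B n ω : ℝ) = (σ:ℝ) * ((n:ℝ)+ρ) := hTR n ω
          have hfit' := hfit n ω
          have hcast : ∀ k, k ≤ m → ((a (m-k) : ℤ):ℝ) = (k:ℝ)*(d:ℝ) + ((a m : ℤ):ℝ) := by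
            intro k hk
            exact_mod_cast haval k hk
          have hnρ : (0:ℝ) < (σ:ℝ) * ((n:ℝ)+ρ) := by positivity
          cases mdlM with
          | false =>
            simp only [Bool.false_eq_true, if_false] at hfit' ⊢
            have h1 := sampleProbR_sum m (W n ω) (B n ω) hfit'
            have h2 := sampleProbR_mean m (W n ω) (B n ω) hm1 hfit'
            rw [hwb] at h2
            calc ∑ k ∈ Finset.range (m+1), (a (m-k):ℝ) * sampleProbR m k (W n ω) (B n ω)
                = ∑ k ∈ Finset.range (m+1),
                    ((d:ℝ) * ((k:ℝ) * sampleProbR m k (W n ω) (B n ω))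
                      + (a m:ℝ) * sampleProbR m k (W n ω) (B n ω)) := by
                  apply Finset.sum_congr rfl
                  intro k hk
                  rw [hcast k (Nat.lt_succ_iff.mp (Finset.mem_range.mp hk))]
                  ring
              _ = (d:ℝ) * (∑ k ∈ Finset.range (m+1), (k:ℝ) * sampleProbR m k (W n ω) (B n ω))
                    + (a m:ℝ) * ∑ k ∈ Finset.range (m+1), sampleProbR m k (W n ω) (B n ω) := by
                  rw [Finset.sum_add_distrib, Finset.mul_sum, Finset.mul_sum]
              _ = (m:ℝ) * (d:ℝ) * (W n ω : ℝ) / ((σ:ℝ) * ((n:ℝ)+ρ)) + (a m : ℝ) := by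
                  rw [h1, h2]
                  field_simp
          | true =>
            simp only [if_true] at hfit' ⊢
            have h1 := sampleProbM_sum m (W n ω) (B n ω) hfit'
            have h2 := sampleProbM_mean m (W n ω) (B n ω) hm1 hfit'
            rw [hwb] at h2
            calc ∑ k ∈ Finset.range (m+1), (a (m-k):ℝ) * sampleProbM m k (W n ω) (B n ω)
                = ∑ k ∈ Finset.range (m+1),
                    ((d:ℝ) * ((k:ℝ) * sampleProbM m k (W n ω) (B n ω))
                      + (a m:ℝ) * sampleProbM m k (W n ω) (B n ω)) := by
                  apply Finset.sum_congr rfl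
                  intro k hk
                  rw [hcast k (Nat.lt_succ_iff.mp (Finset.mem_range.mp hk))]
                  ring
              _ = (d:ℝ) * (∑ k ∈ Finset.range (m+1), (k:ℝ) * sampleProbM m k (W n ω) (B n ω))
                    + (a m:ℝ) * ∑ k ∈ Finset.range (m+1), sampleProbM m k (W n ω) (B n ω) := by
                  rw [Finset.sum_add_distrib, Finset.mul_sum, Finset.mul_sum]
              _ = (m:ℝ) * (d:ℝ) * (W n ω : ℝ) / ((σ:ℝ) * ((n:ℝ)+ρ)) + (a m : ℝ) := by
                  rw [h1, h2]
                  field_simp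
  -- conditional expectation of W (n+1)
  have hnρpos : ∀ n : ℕ, (0:ℝ) < (n:ℝ) + ρ := fun n => by positivity
  have hcondW : ∀ n, μ[(fun ω => (W (n+1) ω : ℝ)) | F n]
      =ᵐ[μ] fun ω => (1 + Λ/((n:ℝ)+ρ)) * (W n ω : ℝ) + (a m : ℝ) := by
    intro n
    have hWsplit : (fun ω => (W (n+1) ω : ℝ))
        = (fun ω => (W n ω : ℝ)) + (fun ω => (a (m - R (n+1) ω) : ℝ)) := by
      funext ω
      have h' : ((W (n+1) ω : ℤ):ℝ) = ((W n ω : ℤ):ℝ) + ((a (m - R (n+1) ω) : ℤ):ℝ) := by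
        exact_mod_cast hdynW n ω
      push_cast at h'
      simpa [Pi.add_apply] using h'
    rw [hWsplit]
    refine (condExp_add (hWint n) (hIncInt n) _).trans ?_
    have hWn : μ[(fun ω => (W n ω : ℝ))|F n] = fun ω => (W n ω : ℝ) :=
      condExp_of_stronglyMeasurable (F.le n) ((hWmF n).stronglyMeasurable) (hWint n)
    rw [hWn]
    filter_upwards [hcond n] with ω hω
    simp only [Pi.add_apply, hω]
    rw [hΛ_eq]
    have h1 := hnρpos n
    field_simp
    ring
  -- recurrence for the expectation
  have he_rec : ∀ n, e (n+1) = (1 + Λ/((n:ℝ)+ρ)) * e n + (a m : ℝ) := by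
    intro n
    have h0 : e (n+1) = ∫ ω, (μ[(fun ω' => (W (n+1) ω' : ℝ))|F n]) ω ∂μ := by
      rw [hedef]
      exact (integral_condExp (F.le n)).symm
    rw [h0, integral_congr_ae (hcondW n),
      integral_add ((hWint n).const_mul _) (integrable_const _),
      integral_const_mul, integral_const]
    simp [hedef]
  -- facts about g
  have hgpos : ∀ n, 0 < g n := fun n => urnG_pos hρpos hΛpos n
  have hganti : ∀ n, g (n+1) ≤ g n := fun n => urnG_antitone hρpos hΛpos n
  have hgsucc : ∀ n : ℕ, g (n+1) = g n * (((n:ℝ) + ρ) / ((n:ℝ) + ρ + Λ)) := by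
    intro n
    rw [hgdef, urnG_succ hρpos hΛpos n, ← hρdef]
  have hgmart : ∀ n : ℕ, g (n+1) * (1 + Λ/((n:ℝ)+ρ)) = g n := by
    intro n
    rw [hgsucc n]
    have h1 := hnρpos n
    have h2 : (0:ℝ) < (n:ℝ)+ρ+Λ := by positivity
    field_simp
    
  -- the martingale
  set Wc : ℕ → Ω → ℝ := fun n ω => g n * ((W n ω : ℝ) - e n) with hWcdef
  have hcalW : ∀ n ω, calW μ σ Λ T0 W n ω = Wc n ω := fun n ω => rfl
  have hWcm : ∀ n, Measurable (Wc n) := fun n =>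
    ((hWm n).sub measurable_const).const_mul (g n)
  have hWcmF : ∀ n, StronglyMeasurable[F n] (Wc n) := fun n =>
    (((hWmF n).sub measurable_const).const_mul (g n)).stronglyMeasurable
  have hWcbd : ∀ n ω, |Wc n ω| ≤ g n * ((σ:ℝ)*((n:ℝ)+ρ)) := by
    intro n ω
    rw [hWcdef]
    rw [abs_mul, abs_of_pos (hgpos n)]
    exact mul_le_mul_of_nonneg_left (hdev n ω) (le_of_lt (hgpos n))
  have hWcint : ∀ n, Integrable (Wc n) μ := fun n =>
    integrable_bdd (hWcm n).aestronglyMeasurable (hWcbd n)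
  have hmart : ∀ n, μ[Wc (n+1)|F n] =ᵐ[μ] Wc n := by
    intro n
    have hsplit : Wc (n+1) = (fun ω => g (n+1) * (W (n+1) ω : ℝ))
        + (fun _ => -(g (n+1) * e (n+1))) := by
      funext ω
      simp only [hWcdef, Pi.add_apply]
      ring
    rw [hsplit]
    refine (condExp_add ((hWint (n+1)).const_mul _) (integrable_const _) _).trans ?_
    have hc1 : μ[(fun ω => g (n+1) * (W (n+1) ω : ℝ))|F n]
        =ᵐ[μ] fun ω => g (n+1) * ((1 + Λ/((n:ℝ)+ρ)) * (W n ω:ℝ) + (a m:ℝ)) := by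
      have hsm : (fun ω => g (n+1) * (W (n+1) ω : ℝ))
          = (g (n+1)) • (fun ω => (W (n+1) ω : ℝ)) := by
        funext ω; simp [smul_eq_mul]
      rw [hsm]
      refine (condExp_smul _ _ _).trans ?_
      filter_upwards [hcondW n] with ω hω
      simp only [Pi.smul_apply, smul_eq_mul, hω]
    have hc2 : μ[(fun _ : Ω => -(g (n+1) * e (n+1)))|F n]
        = fun _ => -(g (n+1) * e (n+1)) := condExp_const (F.le n) _
    filter_upwards [hc1] with ω hω
    simp only [Pi.add_apply, hω, hc2, hWcdef]
    rw [he_rec n]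
    linear_combination ((W n ω:ℝ) - e n) * (hgmart n)
  -- increment bound
  set K : ℝ := 2*A + 2*(σ:ℝ) with hKdef
  have hKpos : 0 < K := by rw [hKdef]; linarith
  have hDb : ∀ n ω, |Wc (n+1) ω - Wc n ω| ≤ K * g n := by
    intro n ω
    have hΔW : (W (n+1) ω : ℝ) - (W n ω : ℝ) = (a (m - R (n+1) ω) : ℝ) := by
      have h' : ((W (n+1) ω : ℤ):ℝ) = ((W n ω:ℤ):ℝ) + ((a (m - R (n+1) ω):ℤ):ℝ) := by
        exact_mod_cast hdynW n ω
      push_cast at h'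
      linarith
    have hΔe : |e (n+1) - e n| ≤ (σ:ℝ) + A := by
      rw [he_rec n]
      have h0 : (0:ℝ) ≤ Λ/((n:ℝ)+ρ) := by positivity
      have h1 : |Λ/((n:ℝ)+ρ) * e n| ≤ (σ:ℝ) := by
        rw [abs_of_nonneg (mul_nonneg h0 (he_nonneg n))]
        calc Λ/((n:ℝ)+ρ) * e n ≤ Λ/((n:ℝ)+ρ) * ((σ:ℝ)*((n:ℝ)+ρ)) :=
            mul_le_mul_of_nonneg_left (he_le n) h0
          _ = Λ * (σ:ℝ) := by
              field_simp
          _ ≤ (σ:ℝ) := by nlinarith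
      have hAm : |(a m : ℝ)| ≤ A := by
        have hub := hav_ub 0 (Nat.zero_le m)
        have hlb := hav_lb 0 (Nat.zero_le m)
        simp only [Nat.sub_zero] at hub hlb
        rw [abs_of_nonneg (by exact_mod_cast le_trans zero_le_one hlb), hAdef]
        exact_mod_cast hub
      calc |(1 + Λ/((n:ℝ)+ρ)) * e n + (a m:ℝ) - e n|
          = |Λ/((n:ℝ)+ρ) * e n + (a m:ℝ)| := by ring_nf
        _ ≤ |Λ/((n:ℝ)+ρ) * e n| + |(a m:ℝ)| := abs_add_le _ _
        _ ≤ (σ:ℝ) + A := add_le_add h1 hAm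
    have hgd1 : 0 ≤ g n - g (n+1) := by linarith [hganti n]
    have hgd2 : (g n - g (n+1)) * ((σ:ℝ)*((n:ℝ)+ρ)) ≤ (σ:ℝ) * g n := by
      rw [hgsucc n]
      have h1 := hnρpos n
      have h2 : (0:ℝ) < (n:ℝ)+ρ+Λ := by positivity
      have h3 : g n - g n * (((n:ℝ)+ρ)/((n:ℝ)+ρ+Λ)) = g n * (Λ/((n:ℝ)+ρ+Λ)) := by
        field_simp
        ring
      rw [h3]
      have h4 : Λ * ((n:ℝ)+ρ) ≤ (n:ℝ)+ρ+Λ := by nlinarith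
      have h5 : g n * (Λ/((n:ℝ)+ρ+Λ)) * ((σ:ℝ)*((n:ℝ)+ρ))
          = (σ:ℝ) * g n * ((Λ * ((n:ℝ)+ρ))/((n:ℝ)+ρ+Λ)) := by
        field_simp
      rw [h5]
      have h6 : (Λ * ((n:ℝ)+ρ))/((n:ℝ)+ρ+Λ) ≤ 1 := by
        rw [div_le_one h2]
        exact h4
      nlinarith [mul_pos hσR (hgpos n)]
    have hid : Wc (n+1) ω - Wc n ω
        = g (n+1) * ((W (n+1) ω:ℝ) - (W n ω:ℝ)) - g (n+1) * (e (n+1) - e n)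
          + (g (n+1) - g n) * ((W n ω:ℝ) - e n) := by
      simp only [hWcdef]
      ring
    have t1 : |g (n+1) * ((W (n+1) ω:ℝ) - (W n ω:ℝ))| ≤ g n * A := by
      rw [abs_mul, abs_of_pos (hgpos (n+1)), hΔW]
      calc g (n+1) * |(a (m - R (n+1) ω) : ℝ)| ≤ g (n+1) * A :=
          mul_le_mul_of_nonneg_left (habs n ω) (hgpos (n+1)).le
        _ ≤ g n * A := mul_le_mul_of_nonneg_right (hganti n) (by linarith)
    have t2 : |g (n+1) * (e (n+1) - e n)| ≤ g n * ((σ:ℝ) + A) := by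
      rw [abs_mul, abs_of_pos (hgpos (n+1))]
      calc g (n+1) * |e (n+1) - e n| ≤ g (n+1) * ((σ:ℝ) + A) :=
          mul_le_mul_of_nonneg_left hΔe (hgpos (n+1)).le
        _ ≤ g n * ((σ:ℝ) + A) := mul_le_mul_of_nonneg_right (hganti n) (by linarith)
    have t3 : |(g (n+1) - g n) * ((W n ω:ℝ) - e n)| ≤ (σ:ℝ) * g n := by
      rw [abs_mul, abs_sub_comm (g (n+1)) (g n), abs_of_nonneg hgd1]
      calc (g n - g (n+1)) * |(W n ω:ℝ) - e n|
          ≤ (g n - g (n+1)) * ((σ:ℝ)*((n:ℝ)+ρ)) :=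
            mul_le_mul_of_nonneg_left (hdev n ω) hgd1
        _ ≤ (σ:ℝ) * g n := hgd2
    rw [hid]
    calc |g (n+1) * ((W (n+1) ω:ℝ) - (W n ω:ℝ)) - g (n+1) * (e (n+1) - e n)
          + (g (n+1) - g n) * ((W n ω:ℝ) - e n)|
        ≤ |g (n+1) * ((W (n+1) ω:ℝ) - (W n ω:ℝ)) - g (n+1) * (e (n+1) - e n)|
          + |(g (n+1) - g n) * ((W n ω:ℝ) - e n)| := abs_add_le _ _
      _ ≤ |g (n+1) * ((W (n+1) ω:ℝ) - (W n ω:ℝ))| + |g (n+1) * (e (n+1) - e n)|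
          + |(g (n+1) - g n) * ((W n ω:ℝ) - e n)| := by
            linarith [abs_sub (g (n+1) * ((W (n+1) ω:ℝ) - (W n ω:ℝ)))
              (g (n+1) * (e (n+1) - e n))]
      _ ≤ g n * A + g n * ((σ:ℝ) + A) + (σ:ℝ) * g n := by linarith
      _ = K * g n := by rw [hKdef]; ring
  -- exponential integrability
  have hexp_int : ∀ (s:ℝ) (n:ℕ), Integrable (fun ω => Real.exp (s * Wc n ω)) μ := by
    intro s n
    apply integrable_bdd (C := Real.exp (|s| * (g n * ((σ:ℝ)*((n:ℝ)+ρ)))))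
    · exact (((hWcm n).const_mul s).exp).aestronglyMeasurable
    · intro ω
      rw [abs_of_nonneg (le_of_lt (Real.exp_pos _))]
      apply Real.exp_le_exp.2
      calc s * Wc n ω ≤ |s * Wc n ω| := le_abs_self _
        _ = |s| * |Wc n ω| := abs_mul _ _
        _ ≤ |s| * (g n * ((σ:ℝ)*((n:ℝ)+ρ))) :=
            mul_le_mul_of_nonneg_left (hWcbd n ω) (abs_nonneg s)
  -- the mgf bound by induction (Azuma-Hoeffding)
  have hmgf : ∀ (s:ℝ) (N:ℕ), ∫ ω, Real.exp (s * Wc N ω) ∂μ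
      ≤ Real.exp (s^2/2 * ∑ n ∈ Finset.range N, (K * g n)^2) := by
    intro s N
    induction N with
    | zero =>
      have he0 : e 0 = (W0:ℝ) := by
        rw [hedef]
        simp only []
        rw [show (fun ω => (W 0 ω:ℝ)) = fun _ => (W0:ℝ) from funext fun ω => by rw [hinitW ω],
          integral_const]
        simp
      have hWc0 : ∀ ω, Wc 0 ω = 0 := by
        intro ω
        rw [hWcdef]
        simp only []
        rw [hinitW ω, he0]
        ring
      simp only [hWc0, mul_zero, Real.exp_zero, Finset.range_zero, Finset.sum_empty]
      rw [integral_const]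
      simp
    | succ N ih =>
      set cN : ℝ := K * g N with hcNdef
      have hcN : 0 < cN := mul_pos hKpos (hgpos N)
      set f := fun ω => Real.exp (s * Wc N ω) with hfdef
      set Dn := fun ω => Wc (N+1) ω - Wc N ω with hDdef
      have hfm : Measurable f := ((hWcm N).const_mul s).exp
      have hfpos : ∀ ω, 0 ≤ f ω := fun ω => (Real.exp_pos _).le
      have hfbd : ∀ ω, |f ω| ≤ Real.exp (|s| * (g N * ((σ:ℝ)*((N:ℝ)+ρ)))) := by
        intro ω
        rw [abs_of_nonneg (hfpos ω)]
        apply Real.exp_le_exp.2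
        calc s * Wc N ω ≤ |s * Wc N ω| := le_abs_self _
          _ = |s| * |Wc N ω| := abs_mul _ _
          _ ≤ |s| * (g N * ((σ:ℝ)*((N:ℝ)+ρ))) :=
              mul_le_mul_of_nonneg_left (hWcbd N ω) (abs_nonneg s)
      have hfint : Integrable f μ := hexp_int s N
      have hDm : Measurable Dn := (hWcm (N+1)).sub (hWcm N)
      have hDbd : ∀ ω, |Dn ω| ≤ cN := hDb N
      have hDint : Integrable Dn μ := integrable_bdd hDm.aestronglyMeasurable hDbd
      have hfDint : Integrable (fun ω => f ω * Dn ω) μ := by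
        apply integrable_bdd (hfm.mul hDm).aestronglyMeasurable
          (C := Real.exp (|s| * (g N * ((σ:ℝ)*((N:ℝ)+ρ)))) * cN)
        intro ω
        rw [Pi.mul_apply, abs_mul]
        exact mul_le_mul (hfbd ω) (hDbd ω) (abs_nonneg _) (Real.exp_pos _).le
      have hfSM : StronglyMeasurable[F N] f := by
        apply Measurable.stronglyMeasurable
        exact Real.measurable_exp.comp ((hWcmF N).measurable.const_mul s)
      have hDcond : μ[Dn|F N] =ᵐ[μ] 0 := by
        have h1 : μ[Dn|F N] =ᵐ[μ] μ[Wc (N+1)|F N] - μ[Wc N|F N] := by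
          have heq : Dn = Wc (N+1) - Wc N := rfl
          rw [heq]
          exact condExp_sub (hWcint (N+1)) (hWcint N) _
        have h2 : μ[Wc N|F N] = Wc N :=
          condExp_of_stronglyMeasurable (F.le N) (hWcmF N) (hWcint N)
        filter_upwards [h1, hmart N] with ω hω1 hω2
        rw [hω1]
        simp only [Pi.sub_apply, h2, hω2, Pi.zero_apply]
        ring
      have hzero : ∫ ω, f ω * Dn ω ∂μ = 0 := by
        have hpull : μ[(fun ω => f ω * Dn ω)|F N] =ᵐ[μ] fun ω => f ω * (μ[Dn|F N]) ω := by
          have heq : (fun ω => f ω * Dn ω) = f * Dn := rfl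
          rw [heq]
          exact condExp_mul_of_stronglyMeasurable_left hfSM hfDint hDint
        calc ∫ ω, f ω * Dn ω ∂μ
            = ∫ ω, (μ[(fun ω => f ω * Dn ω)|F N]) ω ∂μ := (integral_condExp (F.le N)).symm
          _ = ∫ ω, f ω * (μ[Dn|F N]) ω ∂μ := integral_congr_ae hpull
          _ = 0 := by
              have hz : (fun ω => f ω * (μ[Dn|F N]) ω) =ᵐ[μ] 0 := by
                filter_upwards [hDcond] with ω hω
                simp [hω]
              rw [integral_congr_ae hz]
              simp
      have hptw : ∀ ω, Real.exp (s * Wc (N+1) ω)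
          ≤ Real.cosh (s * cN) * f ω + (Real.sinh (s * cN)/cN) * (f ω * Dn ω) := by
        intro ω
        have hsplit : s * Wc (N+1) ω = s * Wc N ω + s * Dn ω := by
          rw [hDdef]
          ring
        rw [hsplit, Real.exp_add]
        have hech := exp_le_cosh_add s cN (Dn ω) hcN (hDbd ω)
        calc f ω * Real.exp (s * Dn ω)
            ≤ f ω * (Real.cosh (s * cN) + Real.sinh (s * cN)/cN * Dn ω) :=
              mul_le_mul_of_nonneg_left hech (hfpos ω)
          _ = Real.cosh (s * cN) * f ω + (Real.sinh (s * cN)/cN) * (f ω * Dn ω) := by ring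
      have hint_rhs : Integrable (fun ω => Real.cosh (s * cN) * f ω
          + (Real.sinh (s * cN)/cN) * (f ω * Dn ω)) μ :=
        (hfint.const_mul _).add (hfDint.const_mul _)
      calc ∫ ω, Real.exp (s * Wc (N+1) ω) ∂μ
          ≤ ∫ ω, (Real.cosh (s * cN) * f ω + (Real.sinh (s * cN)/cN) * (f ω * Dn ω)) ∂μ :=
            integral_mono (hexp_int s (N+1)) hint_rhs hptw
        _ = Real.cosh (s * cN) * (∫ ω, f ω ∂μ)
            + (Real.sinh (s * cN)/cN) * ∫ ω, f ω * Dn ω ∂μ := by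
            rw [integral_add (hfint.const_mul _) (hfDint.const_mul _),
              integral_const_mul, integral_const_mul]
        _ = Real.cosh (s * cN) * ∫ ω, f ω ∂μ := by rw [hzero]; ring
        _ ≤ Real.exp ((s*cN)^2/2) * Real.exp (s^2/2 * ∑ n ∈ Finset.range N, (K * g n)^2) := by
            apply mul_le_mul (Real.cosh_le_exp_half_sq _) ih
              (integral_nonneg fun ω => hfpos ω) (Real.exp_pos _).le
        _ = Real.exp (s^2/2 * ∑ n ∈ Finset.range (N+1), (K * g n)^2) := by
            rw [← Real.exp_add, Finset.sum_range_succ]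
            congr 1
            rw [hcNdef]
            ring
  -- summability: uniform bound on the variance sums
  obtain ⟨V, hV1, hVle⟩ : ∃ V : ℝ, 1 ≤ V ∧ ∀ N, ∑ n ∈ Finset.range N, (K * g n)^2 ≤ V := by
    have hvnn : ∀ n : ℕ, (0:ℝ) ≤ (K * ρ^Λ)^2 * ((((n:ℝ)+ρ) ^ (Λ+Λ))⁻¹) := by
      intro n
      apply mul_nonneg (sq_nonneg _)
      exact inv_nonneg.2 (Real.rpow_nonneg (hnρpos n).le _)
    have hgb : ∀ n : ℕ, (K * g n)^2 ≤ (K * ρ^Λ)^2 * ((((n:ℝ)+ρ) ^ (Λ+Λ))⁻¹) := by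
      intro n
      have hx : (0:ℝ) < ((n:ℝ)+ρ)^Λ := Real.rpow_pos_of_pos (hnρpos n) Λ
      have h2 := urnG_le hρpos hΛpos hΛle1 n
      rw [← hρdef] at h2
      have h1 : g n ≤ ρ^Λ * (((n:ℝ)+ρ)^Λ)⁻¹ := by
        rw [show g n = g n * (((n:ℝ)+ρ)^Λ) * ((((n:ℝ)+ρ)^Λ))⁻¹ from by field_simp]
        exact mul_le_mul_of_nonneg_right h2 (inv_nonneg.2 hx.le)
      have hrw : (((n:ℝ)+ρ) ^ (Λ+Λ))⁻¹ = ((((n:ℝ)+ρ)^Λ)⁻¹)^2 := by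
        rw [Real.rpow_add (hnρpos n), mul_inv, sq]
      rw [hrw]
      have hKg : K * g n ≤ K * (ρ^Λ * (((n:ℝ)+ρ)^Λ)⁻¹) :=
        mul_le_mul_of_nonneg_left h1 hKpos.le
      calc (K * g n)^2 ≤ (K * (ρ^Λ * (((n:ℝ)+ρ)^Λ)⁻¹))^2 := by
            apply pow_le_pow_left₀ (mul_nonneg hKpos.le (hgpos n).le) hKg
        _ = (K*ρ^Λ)^2 * ((((n:ℝ)+ρ)^Λ)⁻¹)^2 := by ring
    have hsummable : Summable (fun n : ℕ => (K * ρ^Λ)^2 * ((((n:ℝ)+ρ) ^ (Λ+Λ))⁻¹)) :=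
      (summable_rpow_shift ρ (Λ+Λ) hρpos (by linarith)).mul_left _
    refine ⟨(∑' n : ℕ, (K * ρ^Λ)^2 * ((((n:ℝ)+ρ) ^ (Λ+Λ))⁻¹)) + 1, ?_, ?_⟩
    · have h0 : 0 ≤ ∑' n : ℕ, (K * ρ^Λ)^2 * ((((n:ℝ)+ρ) ^ (Λ+Λ))⁻¹) := tsum_nonneg hvnn
      linarith
    · intro N
      calc ∑ n ∈ Finset.range N, (K * g n)^2
          ≤ ∑ n ∈ Finset.range N, (K * ρ^Λ)^2 * ((((n:ℝ)+ρ) ^ (Λ+Λ))⁻¹) :=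
            Finset.sum_le_sum (fun n _ => hgb n)
        _ ≤ ∑' n : ℕ, (K * ρ^Λ)^2 * ((((n:ℝ)+ρ) ^ (Λ+Λ))⁻¹) :=
            Summable.sum_le_tsum _ (fun n _ => hvnn n) hsummable
        _ ≤ _ := by linarith
  have hVpos : (0:ℝ) < V := lt_of_lt_of_le one_pos hV1
  have hmgfV : ∀ (s':ℝ) (N:ℕ), ∫ ω, Real.exp (s' * Wc N ω) ∂μ ≤ Real.exp (s'^2/2 * V) := by
    intro s' N
    calc ∫ ω, Real.exp (s' * Wc N ω) ∂μ
        ≤ Real.exp (s'^2/2 * ∑ n ∈ Finset.range N, (K * g n)^2) := hmgf s' N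
      _ ≤ Real.exp (s'^2/2 * V) :=
          Real.exp_le_exp.2 (mul_le_mul_of_nonneg_left (hVle N) (by positivity))
  -- concentration for each N
  have hconc : ∀ (N:ℕ) (u : ℝ), 0 < u →
      (μ {ω | u ≤ |Wc N ω|}).toReal ≤ 2 * Real.exp (-(u^2) / (2*V)) := by
    intro N u hu
    set s := u / V with hsdef
    have hspos : 0 < s := div_pos hu hVpos
    have haux : ∀ s' r : ℝ, ∀ E : Set Ω, MeasurableSet E →
        (∀ ω ∈ E, r ≤ s' * Wc N ω) →
        (μ E).toReal ≤ Real.exp (s'^2/2 * V - r) := by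
      intro s' r E hEm hE
      have hindint : Integrable (fun ω => E.indicator (fun _ => (1:ℝ)) ω) μ := by
        apply integrable_bdd (measurable_const.indicator hEm).aestronglyMeasurable (C := 1)
        intro ω
        rw [Set.indicator_apply]
        split_ifs <;> norm_num
      have hint2 : Integrable (fun ω => Real.exp (s' * Wc N ω - r)) μ := by
        have heq : (fun ω => Real.exp (s' * Wc N ω - r))
            = fun ω => Real.exp (s' * Wc N ω) * Real.exp (-(r)) := by
          funext ω
          rw [← Real.exp_add]
          ring_nf
        rw [heq]
        exact (hexp_int s' N).mul_const _
      have hind : ∀ ω, E.indicator (fun _ => (1:ℝ)) ω ≤ Real.exp (s' * Wc N ω - r) := by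
        intro ω
        by_cases h : ω ∈ E
        · rw [Set.indicator_of_mem h]
          have h1 := hE ω h
          nlinarith [Real.add_one_le_exp (s' * Wc N ω - r)]
        · rw [Set.indicator_of_notMem h]
          positivity
      have hmeq : (μ E).toReal = ∫ ω, E.indicator (fun _ => (1:ℝ)) ω ∂μ := by
        rw [integral_indicator_const (1:ℝ) hEm]
        simp [Measure.real]
      rw [hmeq]
      calc ∫ ω, E.indicator (fun _ => (1:ℝ)) ω ∂μ
          ≤ ∫ ω, Real.exp (s' * Wc N ω - r) ∂μ := integral_mono hindint hint2 hind
        _ = Real.exp (-(r)) * ∫ ω, Real.exp (s' * Wc N ω) ∂μ := by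
            rw [show (fun ω => Real.exp (s' * Wc N ω - r))
              = fun ω => Real.exp (-(r)) * Real.exp (s' * Wc N ω) from funext fun ω => by
                rw [← Real.exp_add]; ring_nf, integral_const_mul]
        _ ≤ Real.exp (-(r)) * Real.exp (s'^2/2 * V) :=
            mul_le_mul_of_nonneg_left (hmgfV s' N) (Real.exp_pos _).le
        _ = Real.exp (s'^2/2 * V - r) := by rw [← Real.exp_add]; ring_nf
    have hexpo : s^2/2 * V - s*u = -(u^2) / (2*V) := by
      rw [hsdef]
      field_simp
      ring
    have h1 : (μ {ω | u ≤ Wc N ω}).toReal ≤ Real.exp (-(u^2) / (2*V)) := by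
      rw [← hexpo]
      apply haux s (s*u) _ (measurableSet_le measurable_const (hWcm N))
      intro ω hω
      have : u ≤ Wc N ω := hω
      nlinarith
    have h2 : (μ {ω | Wc N ω ≤ -u}).toReal ≤ Real.exp (-(u^2) / (2*V)) := by
      have hexpo2 : (-s)^2/2 * V - s*u = -(u^2) / (2*V) := by
        rw [hsdef]
        field_simp
        ring
      rw [← hexpo2]
      apply haux (-s) (s*u) _ (measurableSet_le (hWcm N) measurable_const)
      intro ω hω
      have : Wc N ω ≤ -u := hω
      nlinarith
    have hsub : {ω | u ≤ |Wc N ω|} ⊆ {ω | u ≤ Wc N ω} ∪ {ω | Wc N ω ≤ -u} := by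
      intro ω hω
      have hω' : u ≤ |Wc N ω| := hω
      rcases le_abs.mp hω' with h | h
      · exact Or.inl h
      · exact Or.inr (by simp only [Set.mem_setOf_eq]; linarith)
    calc (μ {ω | u ≤ |Wc N ω|}).toReal
        ≤ (μ ({ω | u ≤ Wc N ω} ∪ {ω | Wc N ω ≤ -u})).toReal :=
          ENNReal.toReal_mono (measure_ne_top μ _) (measure_mono hsub)
      _ ≤ ((μ {ω | u ≤ Wc N ω}) + μ {ω | Wc N ω ≤ -u}).toReal :=
          ENNReal.toReal_mono (ENNReal.add_ne_top.2 ⟨measure_ne_top μ _, measure_ne_top μ _⟩)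
            (measure_union_le _ _)
      _ = (μ {ω | u ≤ Wc N ω}).toReal + (μ {ω | Wc N ω ≤ -u}).toReal :=
          ENNReal.toReal_add (measure_ne_top μ _) (measure_ne_top μ _)
      _ ≤ 2 * Real.exp (-(u^2) / (2*V)) := by linarith
  -- pass to the limit
  refine ⟨1/(8*V), 2, by positivity, by norm_num, ?_⟩
  intro t ht
  have hWinf' : ∀ᵐ ω ∂μ, Tendsto (fun n => Wc n ω) atTop (𝓝 (Winf ω)) := by
    filter_upwards [hWinf] with ω hω
    have heq : (fun n => calW μ σ Λ T0 W n ω) = fun n => Wc n ω :=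
      funext fun n => hcalW n ω
    rwa [heq] at hω
  set AN : ℕ → Set Ω := fun N => {ω | t/2 ≤ |Wc N ω|} with hANdef
  set BM : ℕ → Set Ω := fun M => ⋂ k, ⋂ (_ : M ≤ k), AN k with hBMdef
  have hBMle : ∀ M, μ (BM M) ≤ ENNReal.ofReal (2 * Real.exp (-((t/2)^2)/(2*V))) := by
    intro M
    calc μ (BM M) ≤ μ (AN M) :=
        measure_mono (Set.iInter_subset_of_subset M (Set.iInter_subset _ (le_refl M)))
      _ ≤ ENNReal.ofReal (2 * Real.exp (-((t/2)^2)/(2*V))) :=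
        (ENNReal.le_ofReal_iff_toReal_le (measure_ne_top μ _) (by positivity)).2
          (hconc M (t/2) (by linarith))
  have hsub : {ω | t ≤ |Winf ω|}
      ⊆ {ω | ¬ Tendsto (fun n => Wc n ω) atTop (𝓝 (Winf ω))} ∪ ⋃ M, BM M := by
    intro ω hω
    by_cases hconv : Tendsto (fun n => Wc n ω) atTop (𝓝 (Winf ω))
    · right
      obtain ⟨M, hM⟩ := Metric.tendsto_atTop.mp hconv (t/2) (by linarith)
      refine Set.mem_iUnion.2 ⟨M, ?_⟩
      refine Set.mem_iInter.2 fun k => Set.mem_iInter.2 fun hk => ?_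
      have h2 := hM k hk
      rw [Real.dist_eq] at h2
      have h3 : t ≤ |Winf ω| := hω
      have h4 := abs_sub_abs_le_abs_sub (Winf ω) (Wc k ω)
      have h5 : |Winf ω - Wc k ω| = |Wc k ω - Winf ω| := abs_sub_comm _ _
      simp only [hANdef, Set.mem_setOf_eq]
      linarith
    · exact Or.inl hconv
  have hbad : μ {ω | ¬ Tendsto (fun n => Wc n ω) atTop (𝓝 (Winf ω))} = 0 := by
    rw [ae_iff] at hWinf'
    exact hWinf'
  have hBMmono : Monotone BM := by
    intro M1 M2 h12 ω hω
    exact Set.mem_iInter.2 fun k => Set.mem_iInter.2 fun hk =>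
      Set.mem_iInter.mp (Set.mem_iInter.mp hω k) (le_trans h12 hk)
  have hUnion : μ (⋃ M, BM M) ≤ ENNReal.ofReal (2 * Real.exp (-((t/2)^2)/(2*V))) := by
    have htend := tendsto_measure_iUnion_atTop (μ := μ) hBMmono
    exact le_of_tendsto htend (Filter.Eventually.of_forall hBMle)
  have hfinal : μ {ω | t ≤ |Winf ω|} ≤ ENNReal.ofReal (2 * Real.exp (-((t/2)^2)/(2*V))) := by
    calc μ {ω | t ≤ |Winf ω|}
        ≤ μ ({ω | ¬ Tendsto (fun n => Wc n ω) atTop (𝓝 (Winf ω))} ∪ ⋃ M, BM M) :=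
          measure_mono hsub
      _ ≤ μ {ω | ¬ Tendsto (fun n => Wc n ω) atTop (𝓝 (Winf ω))} + μ (⋃ M, BM M) :=
          measure_union_le _ _
      _ = μ (⋃ M, BM M) := by rw [hbad, zero_add]
      _ ≤ ENNReal.ofReal (2 * Real.exp (-((t/2)^2)/(2*V))) := hUnion
  calc (μ {ω | t ≤ |Winf ω|}).toReal
      ≤ (ENNReal.ofReal (2 * Real.exp (-((t/2)^2)/(2*V)))).toReal :=
        ENNReal.toReal_mono ENNReal.ofReal_ne_top hfinal
    _ = 2 * Real.exp (-((t/2)^2)/(2*V)) := ENNReal.toReal_ofReal (by positivity)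
    _ = 2 * Real.exp (-(1/(8*V)) * t^2) := by
        congr 1
        congr 1
        field_simp
        ring
end
end

section
/- Let (X_n)_{n≥1} be a sequence of real random variables and (g_n)_{n≥1} a real sequence such that X_n − g_n is integer-valued for every n ≥ 1. Suppose that for some α > 0 and some almost surely finite random variable X, n^{−α}·X_n converges to X in distribution, and that K := liminf_{n→∞} n^{α}·max_{m∈ℤ} P(X_n − g_n = m) < ∞. Then the distribution of X is absolutely continuous with respect to Lebesgue measure on (−∞,∞) and admits a density bounded uniformly by K. -/
open MeasureTheory Filter Set Topology ENNReal

noncomputable section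

lemma aux_interval {Ω : Type*} [m0 : MeasurableSpace Ω] (μ : Measure Ω) [IsProbabilityMeasure μ]
    (X : ℕ → Ω → ℝ) (g : ℕ → ℝ)
    (hint : ∀ n, 1 ≤ n → ∀ ω, ∃ z : ℤ, X n ω - g n = (z : ℝ))
    (α : ℝ) (hα : 0 < α) (ν : Measure ℝ) [IsProbabilityMeasure ν]
    (hconv : ∀ f : BoundedContinuousFunction ℝ ℝ,
      Tendsto (fun n : ℕ => ∫ ω, f ((n : ℝ) ^ (-α) * X n ω) ∂μ) atTop (𝓝 (∫ x, f x ∂ν)))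
    (K : ℝ≥0∞)
    (hK : K = Filter.liminf (fun n : ℕ =>
        ENNReal.ofReal ((n : ℝ) ^ α) * ⨆ z : ℤ, μ {ω | X n ω - g n = (z : ℝ)}) atTop)
    (hKfin : K ≠ ∞) (a b : ℝ) (hab : a ≤ b) :
    ν (Icc a b) ≤ K * ENNReal.ofReal (b - a) := by
  set M : ℕ → ℝ≥0∞ := fun n => ⨆ z : ℤ, μ {ω | X n ω - g n = (z : ℝ)} with hM
  have hstep : ∀ ε : ℝ, 0 < ε → ν (Icc a b) ≤ K * ENNReal.ofReal (b - a + 3*ε) := by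
    intro ε hε
    have hsubset : Icc a b ⊆ Ioo (a - ε) (b + ε) :=
      Icc_subset_Ioo (by linarith) (by linarith)
    obtain ⟨f, hf0, hf1, hf01⟩ := exists_continuous_zero_one_of_isClosed
      (isOpen_Ioo (a := a - ε) (b := b + ε)).isClosed_compl isClosed_Icc
      (disjoint_left.mpr fun x hx hxt => hx (hsubset hxt))
    set fb : BoundedContinuousFunction ℝ ℝ :=
      BoundedContinuousFunction.ofNormedAddCommGroup f f.continuous 1
        (fun x => by
          rw [Real.norm_eq_abs, abs_le]
          exact ⟨by linarith [(hf01 x).1], (hf01 x).2⟩) with hfb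
    have hfbx : ∀ x, fb x = f x := fun x => rfl
    -- Step 1 : ν (Icc a b) ≤ ∫ fb dν
    have hA2 : ν (Icc a b) ≤ ENNReal.ofReal (∫ x, fb x ∂ν) := by
      have h1 : ν (Icc a b) = ∫⁻ x, (Icc a b).indicator 1 x ∂ν :=
        (lintegral_indicator_one measurableSet_Icc).symm
      have h2 : ∫⁻ x, (Icc a b).indicator 1 x ∂ν ≤ ∫⁻ x, ENNReal.ofReal (fb x) ∂ν := by
        refine lintegral_mono fun x => ?_
        by_cases hx : x ∈ Icc a b
        · have hfx : fb x = 1 := by rw [hfbx]; simpa using hf1 hx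
          simp [indicator_of_mem hx, hfx]
        · simp [indicator_of_notMem hx]
      have h3 : ∫⁻ x, ENNReal.ofReal (fb x) ∂ν = ENNReal.ofReal (∫ x, fb x ∂ν) :=
        (MeasureTheory.ofReal_integral_eq_lintegral_ofReal (fb.integrable ν)
          (Eventually.of_forall fun x => (hf01 x).1)).symm
      rw [h1, ← h3]; exact h2
    set sn : ℕ → Set Ω := fun n => {ω | (n : ℝ) ^ (-α) * X n ω ∈ Ioo (a - ε) (b + ε)} with hsn
    -- Step 2 : ∫ fb (X'_n) dμ ≤ μ (sn n)
    have hr : ∀ n : ℕ, ENNReal.ofReal (∫ ω, fb ((n : ℝ) ^ (-α) * X n ω) ∂μ) ≤ μ (sn n) := by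
      intro n
      by_cases hi : Integrable (fun ω => fb ((n : ℝ) ^ (-α) * X n ω)) μ
      · have hpt : ∀ ω, ENNReal.ofReal (fb ((n : ℝ) ^ (-α) * X n ω)) ≤ (sn n).indicator 1 ω := by
          intro ω
          by_cases hω : ω ∈ sn n
          · rw [indicator_of_mem hω]
            exact ENNReal.ofReal_le_one.mpr (hf01 _).2
          · rw [indicator_of_notMem hω]
            have h0 : fb ((n : ℝ) ^ (-α) * X n ω) = 0 := by
              rw [hfbx]
              simpa using hf0 (show ((n : ℝ) ^ (-α) * X n ω) ∈ (Ioo (a - ε) (b + ε))ᶜ from hω)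
            rw [h0]; simp
        calc ENNReal.ofReal (∫ ω, fb ((n : ℝ) ^ (-α) * X n ω) ∂μ)
            = ENNReal.ofReal ((∫⁻ ω, ENNReal.ofReal (fb ((n : ℝ) ^ (-α) * X n ω)) ∂μ).toReal) := by
              rw [integral_eq_lintegral_of_nonneg_ae (f := fun ω => fb ((n : ℝ) ^ (-α) * X n ω))
                (Eventually.of_forall fun ω => (hf01 _).1) hi.aestronglyMeasurable]
          _ ≤ ∫⁻ ω, ENNReal.ofReal (fb ((n : ℝ) ^ (-α) * X n ω)) ∂μ := ENNReal.ofReal_toReal_le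
          _ ≤ ∫⁻ ω, (sn n).indicator 1 ω ∂μ := lintegral_mono hpt
          _ ≤ μ (sn n) := lintegral_indicator_one_le _
      · rw [integral_undef hi]; simp
    -- Step 3 : pass to the liminf
    have hliminf1 : ENNReal.ofReal (∫ x, fb x ∂ν) ≤ Filter.liminf (fun n => μ (sn n)) atTop := by
      have htends : Tendsto (fun n : ℕ => ENNReal.ofReal (∫ ω, fb ((n : ℝ) ^ (-α) * X n ω) ∂μ)) atTop
          (𝓝 (ENNReal.ofReal (∫ x, fb x ∂ν))) :=
        (ENNReal.continuous_ofReal.tendsto _).comp (hconv fb)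
      rw [← htends.liminf_eq]
      exact liminf_le_liminf (Eventually.of_forall hr)
    -- Step 4 : counting bound
    have hcount : ∀ n : ℕ, 1 ≤ n →
        μ (sn n) ≤ ENNReal.ofReal ((b - a + 2*ε) * (n:ℝ)^α + 1) * M n := by
      intro n hn
      have hn0 : (0:ℝ) < (n:ℝ) := by exact_mod_cast hn
      have hnα : (0:ℝ) < (n:ℝ)^α := Real.rpow_pos_of_pos hn0 α
      set c' := (n:ℝ)^α * (a - ε) - g n with hc'
      set d' := (n:ℝ)^α * (b + ε) - g n with hd'
      have hid : ∀ ω, (n:ℝ)^α * ((n:ℝ)^(-α) * X n ω) = X n ω := by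
        intro ω
        rw [← mul_assoc, ← Real.rpow_add hn0]
        simp
      have hsub : sn n ⊆ ⋃ z ∈ Finset.Ioo ⌊c'⌋ ⌈d'⌉, {ω | X n ω - g n = (z:ℝ)} := by
        intro ω hω
        obtain ⟨z, hz⟩ := hint n hn ω
        have h1 : a - ε < (n:ℝ)^(-α) * X n ω := hω.1
        have h2 : (n:ℝ)^(-α) * X n ω < b + ε := hω.2
        have h1' : (n:ℝ)^α * (a - ε) < X n ω := by
          have := (mul_lt_mul_iff_right₀ hnα).mpr h1
          rwa [hid ω] at this
        have h2' : X n ω < (n:ℝ)^α * (b + ε) := by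
          have := (mul_lt_mul_iff_right₀ hnα).mpr h2
          rwa [hid ω] at this
        have hcz : c' < (z:ℝ) := by rw [hc']; linarith
        have hdz : (z:ℝ) < d' := by rw [hd']; linarith
        exact Set.mem_biUnion
          (Finset.mem_Ioo.mpr ⟨Int.floor_lt.mpr hcz, Int.lt_ceil.mpr hdz⟩) hz
      have hcard : (((Finset.Ioo ⌊c'⌋ ⌈d'⌉).card : ℝ)) ≤ (b - a + 2*ε) * (n:ℝ)^α + 1 := by
        have hprod : 0 ≤ (b - a + 2*ε) * (n:ℝ)^α :=
          mul_nonneg (by linarith) hnα.le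
        rw [Int.card_Ioo]
        have hd1 : (⌈d'⌉ : ℝ) < d' + 1 := Int.ceil_lt_add_one d'
        have hc1 : c' - 1 < (⌊c'⌋ : ℝ) := Int.sub_one_lt_floor c'
        have hdc : d' - c' = (b - a + 2*ε) * (n:ℝ)^α := by rw [hc', hd']; ring
        rcases le_or_gt (⌈d'⌉ - ⌊c'⌋ - 1) 0 with h | h
        · rw [Int.toNat_of_nonpos h]
          simp only [Nat.cast_zero]
          linarith
        · have h2 : (((⌈d'⌉ - ⌊c'⌋ - 1).toNat : ℝ)) = (⌈d'⌉:ℝ) - ⌊c'⌋ - 1 := by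
            exact_mod_cast congrArg (Int.cast : ℤ → ℝ) (Int.toNat_of_nonneg h.le)
          rw [h2]
          linarith
      calc μ (sn n) ≤ ∑ z ∈ Finset.Ioo ⌊c'⌋ ⌈d'⌉, μ {ω | X n ω - g n = (z:ℝ)} :=
            (measure_mono hsub).trans (measure_biUnion_finset_le _ _)
        _ ≤ ∑ _z ∈ Finset.Ioo ⌊c'⌋ ⌈d'⌉, M n :=
            Finset.sum_le_sum fun z _ => le_iSup (fun z : ℤ => μ {ω | X n ω - g n = (z:ℝ)}) z
        _ = ((Finset.Ioo ⌊c'⌋ ⌈d'⌉).card : ℝ≥0∞) * M n := by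
            rw [Finset.sum_const, nsmul_eq_mul]
        _ ≤ ENNReal.ofReal ((b - a + 2*ε) * (n:ℝ)^α + 1) * M n := by
            refine mul_le_mul_left ?_ _
            calc ((Finset.Ioo ⌊c'⌋ ⌈d'⌉).card : ℝ≥0∞)
                = ENNReal.ofReal ((Finset.Ioo ⌊c'⌋ ⌈d'⌉).card : ℝ) :=
                  (ENNReal.ofReal_natCast _).symm
              _ ≤ _ := ENNReal.ofReal_le_ofReal hcard
    -- Step 5 : eventual bound and liminf computation
    have htop : Tendsto (fun n : ℕ => (n:ℝ)^α) atTop atTop :=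
      (tendsto_rpow_atTop hα).comp tendsto_natCast_atTop_atTop
    have hev : ∀ᶠ n : ℕ in atTop, μ (sn n) ≤
        ENNReal.ofReal (b - a + 3*ε) * (ENNReal.ofReal ((n:ℝ)^α) * M n) := by
      filter_upwards [eventually_ge_atTop 1, htop.eventually_ge_atTop (1/ε)] with n hn1 hnε
      refine (hcount n hn1).trans ?_
      have hnα : (0:ℝ) < (n:ℝ)^α := Real.rpow_pos_of_pos (by exact_mod_cast hn1) α
      have h1 : 1 ≤ ε * (n:ℝ)^α := by
        rw [div_le_iff₀ hε] at hnε
        linarith [hnε]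
      have hreal : (b - a + 2*ε) * (n:ℝ)^α + 1 ≤ (b - a + 3*ε) * (n:ℝ)^α := by nlinarith
      calc ENNReal.ofReal ((b - a + 2*ε) * (n:ℝ)^α + 1) * M n
          ≤ ENNReal.ofReal ((b - a + 3*ε) * (n:ℝ)^α) * M n :=
            mul_le_mul_left (ENNReal.ofReal_le_ofReal hreal) _
        _ = ENNReal.ofReal (b - a + 3*ε) * (ENNReal.ofReal ((n:ℝ)^α) * M n) := by
            rw [ENNReal.ofReal_mul (by linarith), mul_assoc]
    have hcpos : (0:ℝ) < b - a + 3*ε := by linarith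
    have hliminf2 : Filter.liminf (fun n => μ (sn n)) atTop ≤
        ENNReal.ofReal (b - a + 3*ε) * K := by
      have hK' : K = Filter.liminf (fun n : ℕ => ENNReal.ofReal ((n:ℝ)^α) * M n) atTop := hK
      calc Filter.liminf (fun n => μ (sn n)) atTop
          ≤ Filter.liminf (fun n : ℕ =>
              ENNReal.ofReal (b - a + 3*ε) * (ENNReal.ofReal ((n:ℝ)^α) * M n)) atTop :=
            liminf_le_liminf hev
        _ ≤ Filter.limsup (fun _ : ℕ => ENNReal.ofReal (b - a + 3*ε)) atTop *
              Filter.liminf (fun n : ℕ => ENNReal.ofReal ((n:ℝ)^α) * M n) atTop := by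
            refine ENNReal.liminf_mul_le ?_ ?_
            · left; rw [limsup_const]
              exact (ENNReal.ofReal_pos.mpr hcpos).ne'
            · left; rw [limsup_const]
              exact ENNReal.ofReal_ne_top
        _ = ENNReal.ofReal (b - a + 3*ε) * K := by rw [limsup_const, hK']
    calc ν (Icc a b) ≤ ENNReal.ofReal (∫ x, fb x ∂ν) := hA2
      _ ≤ Filter.liminf (fun n => μ (sn n)) atTop := hliminf1
      _ ≤ ENNReal.ofReal (b - a + 3*ε) * K := hliminf2
      _ = K * ENNReal.ofReal (b - a + 3*ε) := mul_comm _ _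
  -- pass to the limit ε → 0
  refine ENNReal.le_of_forall_pos_le_add fun η hη hfin' => ?_
  have hK1 : (0:ℝ) < K.toReal + 1 := by positivity
  have hηpos : (0:ℝ) < (η:ℝ) := hη
  set ε : ℝ := (η:ℝ) / (3 * (K.toReal + 1)) with hεdef
  have hεpos : 0 < ε := by positivity
  have hsmall : K * ENNReal.ofReal (3*ε) ≤ (η : ℝ≥0∞) := by
    rw [← ENNReal.ofReal_toReal hKfin, ← ENNReal.ofReal_mul ENNReal.toReal_nonneg]
    calc ENNReal.ofReal (K.toReal * (3*ε)) ≤ ENNReal.ofReal (η:ℝ) := by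
          apply ENNReal.ofReal_le_ofReal
          have heq : K.toReal * (3*ε) = (η:ℝ) * K.toReal / (K.toReal + 1) := by
            rw [hεdef]; field_simp
          rw [heq, div_le_iff₀ hK1]
          nlinarith [ENNReal.toReal_nonneg (a := K)]
      _ = (η : ℝ≥0∞) := ENNReal.ofReal_coe_nnreal
  calc ν (Icc a b) ≤ K * ENNReal.ofReal (b - a + 3*ε) := hstep ε hεpos
    _ = K * ENNReal.ofReal (b - a) + K * ENNReal.ofReal (3*ε) := by
        rw [← mul_add, ← ENNReal.ofReal_add (by linarith) (by positivity)]
    _ ≤ K * ENNReal.ofReal (b - a) + η := add_le_add_right hsmall _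


/-- A finite measure on ℝ whose Icc-measures are bounded by `K * length` is `≤ K • volume`. -/
lemma aux_le_smul_volume (ν : Measure ℝ) [IsProbabilityMeasure ν] (K : ℝ≥0∞) (hKfin : K ≠ ∞)
    (h : ∀ a b : ℝ, a ≤ b → ν (Icc a b) ≤ K * ENNReal.ofReal (b - a)) :
    ν ≤ K • (volume : Measure ℝ) := by
  set F := ProbabilityTheory.cdf ν with hF
  have hFx : ∀ x, F x = (ν (Iic x)).toReal := fun x => ProbabilityTheory.cdf_eq_real ν x
  have hsum : ∀ a b : ℝ, a ≤ b → ν (Iic b) = ν (Iic a) + ν (Ioc a b) := by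
    intro a b hab
    rw [← measure_union (Iic_disjoint_Ioc le_rfl) measurableSet_Ioc, Iic_union_Ioc_eq_Iic hab]
  have hdiff : ∀ a b : ℝ, a ≤ b → F b - F a = (ν (Ioc a b)).toReal := by
    intro a b hab
    rw [hFx, hFx, hsum a b hab, ENNReal.toReal_add (measure_ne_top _ _) (measure_ne_top _ _)]
    ring
  have hIoc : ∀ a b : ℝ, a ≤ b → (ν (Ioc a b)).toReal ≤ K.toReal * (b - a) := by
    intro a b hab
    have h1 : ν (Ioc a b) ≤ K * ENNReal.ofReal (b - a) :=
      (measure_mono Ioc_subset_Icc_self).trans (h a b hab)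
    calc (ν (Ioc a b)).toReal ≤ (K * ENNReal.ofReal (b - a)).toReal :=
          ENNReal.toReal_mono (by finiteness) h1
      _ = K.toReal * (b - a) := by
          rw [ENNReal.toReal_mul, ENNReal.toReal_ofReal (by linarith)]
  have hGmono : Monotone fun x => K.toReal * x - F x := by
    intro a b hab
    have := hIoc a b hab
    have := hdiff a b hab
    simp only
    nlinarith [this]
  have hGrc : ∀ x, ContinuousWithinAt (fun x => K.toReal * x - F x) (Ici x) x := by
    intro x
    exact ((continuous_const.mul continuous_id).continuousWithinAt).sub (F.right_continuous x)
  set G : StieltjesFunction ℝ := ⟨fun x => K.toReal * x - F x, hGmono, hGrc⟩ with hGdef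
  haveI : IsLocallyFiniteMeasure (ν + G.measure) :=
    ⟨fun x => by
      obtain ⟨s, hs, h⟩ := G.measure.finiteAt_nhds x
      exact ⟨s, hs, by
        rw [Measure.add_apply]
        exact ENNReal.add_lt_top.mpr ⟨measure_lt_top ν s, h⟩⟩⟩
  have key : ν + G.measure = K • (volume : Measure ℝ) := by
    refine Measure.ext_of_Ioc _ _ (fun a b hab => ?_)
    have hab' : a ≤ b := hab.le
    have hνIoc : ν (Ioc a b) = ENNReal.ofReal (F b - F a) := by
      rw [hdiff a b hab', ENNReal.ofReal_toReal (measure_ne_top _ _)]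
    rw [Measure.add_apply, G.measure_Ioc, hνIoc]
    have hG : G b - G a = K.toReal * (b - a) - (F b - F a) := by
      simp only [hGdef]; ring
    rw [hG, ← ENNReal.ofReal_add (by rw [hdiff a b hab']; positivity)
      (by nlinarith [hIoc a b hab', hdiff a b hab'])]
    have : F b - F a + (K.toReal * (b - a) - (F b - F a)) = K.toReal * (b - a) := by ring
    rw [this, Measure.smul_apply, Real.volume_Ioc, smul_eq_mul,
      ENNReal.ofReal_mul ENNReal.toReal_nonneg, ENNReal.ofReal_toReal hKfin]
  calc ν ≤ ν + G.measure := Measure.le_add_right le_rfl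
    _ = K • volume := key

/-- From `ν ≤ K • volume` get the conclusion. -/
lemma aux_conclusion (ν : Measure ℝ) [IsFiniteMeasure ν] (K : ℝ≥0∞) (hKfin : K ≠ ∞)
    (hle : ν ≤ K • (volume : Measure ℝ)) :
    ν ≪ volume ∧
    ∃ f : ℝ → ℝ, (∀ x, 0 ≤ f x) ∧ (∀ x, f x ≤ K.toReal) ∧
      ν = volume.withDensity fun x => ENNReal.ofReal (f x) := by
  have hsmul : (K • (volume : Measure ℝ)) ≪ volume := by
    refine Measure.AbsolutelyContinuous.mk fun s hs h0 => ?_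
    simp [Measure.smul_apply, h0]
  have hac : ν ≪ volume := (Measure.absolutelyContinuous_of_le hle).trans hsmul
  set d := ν.rnDeriv volume with hd
  have hwd : volume.withDensity d = ν := Measure.withDensity_rnDeriv_eq ν volume hac
  have hbound : d ≤ᵐ[volume] fun _ => K := by
    refine ae_le_of_forall_setLIntegral_le_of_sigmaFinite (Measure.measurable_rnDeriv _ _)
      (fun s hs hfin => ?_)
    rw [Measure.setLIntegral_rnDeriv hac s]
    calc ν s ≤ (K • (volume : Measure ℝ)) s := hle s
      _ = K * volume s := by simp [Measure.smul_apply]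
      _ = ∫⁻ _ in s, K ∂volume := by rw [setLIntegral_const]
  have hlt : ∀ᵐ x ∂(volume : Measure ℝ), d x < ∞ := Measure.rnDeriv_lt_top ν volume
  refine ⟨hac, fun x => min ((d x).toReal) K.toReal, fun x => le_min ENNReal.toReal_nonneg
    ENNReal.toReal_nonneg, fun x => min_le_right _ _, ?_⟩
  rw [← hwd]
  refine (withDensity_congr_ae ?_).symm
  filter_upwards [hbound, hlt] with x hb hl
  have hne : d x ≠ ∞ := hl.ne
  rw [min_eq_left (ENNReal.toReal_mono hKfin hb), ENNReal.ofReal_toReal hne]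


/-- If `X_n - g_n` is integer-valued, `n^{-α} X_n → X` in distribution
and `K = liminf_n n^α sup_{m ∈ ℤ} P(X_n - g_n = m) < ∞`, then the law of `X` is absolutely
continuous with a density bounded by `K`. -/
theorem density_lemma {Ω : Type*} [m0 : MeasurableSpace Ω] (μ : Measure Ω)
    [IsProbabilityMeasure μ]
    (X : ℕ → Ω → ℝ) (g : ℕ → ℝ)
    (hint : ∀ n, 1 ≤ n → ∀ ω, ∃ z : ℤ, X n ω - g n = (z : ℝ))
    (α : ℝ) (hα : 0 < α)
    (Xlim : Ω → ℝ) (hXlim : Measurable Xlim)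
    (hconv : TendstoInDistribution μ (fun n ω => (n : ℝ) ^ (-α) * X n ω) (μ.map Xlim))
    (K : ℝ≥0∞)
    (hK : K = Filter.liminf (fun n : ℕ =>
        ENNReal.ofReal ((n : ℝ) ^ α) * ⨆ z : ℤ, μ {ω | X n ω - g n = (z : ℝ)}) atTop)
    (hKfin : K < ⊤) :
    μ.map Xlim ≪ volume ∧
    ∃ f : ℝ → ℝ, (∀ x, 0 ≤ f x) ∧ (∀ x, f x ≤ K.toReal) ∧
      μ.map Xlim = volume.withDensity fun x => ENNReal.ofReal (f x) := by
  set ν := μ.map Xlim with hν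
  haveI : IsProbabilityMeasure ν := Measure.isProbabilityMeasure_map hXlim.aemeasurable
  have hicc : ∀ a b : ℝ, a ≤ b → ν (Icc a b) ≤ K * ENNReal.ofReal (b - a) :=
    aux_interval μ X g hint α hα ν (fun f => hconv f) K hK hKfin.ne
  have hle : ν ≤ K • (volume : Measure ℝ) :=
    aux_le_smul_volume ν K hKfin.ne hicc
  exact aux_conclusion ν K hKfin.ne hle
end
end
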